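/- Every invertible totally nonnegative n×n real matrix is the limit of a sequence of totally positive n×n matrices. -/

import Mathlib

open Matrix Finset


/-- A square real matrix is totally positive if every minor is positive. -/
def TotallyPositive {n : ℕ} (x : Matrix (Fin n) (Fin n) ℝ) : Prop :=
  ∀ (k : ℕ) (r c : Fin k → Fin n), StrictMono r → StrictMono c →
    0 < (x.submatrix r c).det

/-- A square real matrix is totally nonnegative if every minor is nonnegative. -/
def TotallyNonneg {n : ℕ} (x : Matrix (Fin n) (Fin n) ℝ) : Prop :=
  ∀ (k : ℕ) (r c : Fin k → Fin n), StrictMono r → StrictMono c →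
    0 ≤ (x.submatrix r c).det


section SortPerm

variable {n k : ℕ}

lemma SOf_card (p : Fin k → Fin n) (hp : Function.Injective p) :
    (Finset.image p Finset.univ).card = k := by
  rw [Finset.card_image_of_injective _ hp, Finset.card_univ, Fintype.card_fin]

/-- The strictly monotone parametrization of the image of an injective `p`. -/
def monoOf (p : Fin k → Fin n) (hp : Function.Injective p) : Fin k → Fin n :=
  (Finset.image p Finset.univ).orderEmbOfFin (SOf_card p hp)

lemma monoOf_strictMono (p : Fin k → Fin n) (hp : Function.Injective p) :
    StrictMono (monoOf p hp) :=
  ((Finset.image p Finset.univ).orderEmbOfFin (SOf_card p hp)).strictMono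

/-- The underlying function of the permutation relating `p` to `monoOf p hp`. -/
def permFun (p : Fin k → Fin n) (hp : Function.Injective p) : Fin k → Fin k := fun i =>
  ((Finset.image p Finset.univ).orderIsoOfFin (SOf_card p hp)).symm
    ⟨p i, Finset.mem_image_of_mem p (Finset.mem_univ i)⟩

lemma monoOf_permFun (p : Fin k → Fin n) (hp : Function.Injective p) (i : Fin k) :
    monoOf p hp (permFun p hp i) = p i := by
  have h := ((Finset.image p Finset.univ).orderIsoOfFin (SOf_card p hp)).apply_symm_apply
    ⟨p i, Finset.mem_image_of_mem p (Finset.mem_univ i)⟩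
  simp only [monoOf, permFun]
  rw [← Finset.coe_orderIsoOfFin_apply]
  exact congrArg Subtype.val h

lemma permFun_injective (p : Fin k → Fin n) (hp : Function.Injective p) :
    Function.Injective (permFun p hp) := by
  intro a b hab
  apply hp
  rw [← monoOf_permFun p hp a, ← monoOf_permFun p hp b, hab]

/-- The permutation relating `p` to `monoOf p hp`. -/
noncomputable def permOf (p : Fin k → Fin n) (hp : Function.Injective p) : Equiv.Perm (Fin k) :=
  Equiv.ofBijective _ (Finite.injective_iff_bijective.1 (permFun_injective p hp))

lemma monoOf_comp_permOf (p : Fin k → Fin n) (hp : Function.Injective p) :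
    monoOf p hp ∘ permOf p hp = p :=
  funext fun i => monoOf_permFun p hp i

lemma monoOf_comp {s : Fin k → Fin n} (hs : StrictMono s) (σ : Equiv.Perm (Fin k))
    (h : Function.Injective (s ∘ σ)) : monoOf (s ∘ σ) h = s := by
  have hmem : ∀ x, s x ∈ Finset.image (s ∘ σ) Finset.univ := fun x => by
    have : s x = (s ∘ σ) (σ.symm x) := by simp
    rw [this]
    exact Finset.mem_image_of_mem _ (Finset.mem_univ _)
  exact (Finset.orderEmbOfFin_unique (SOf_card _ h) hmem hs).symm

lemma permOf_comp {s : Fin k → Fin n} (hs : StrictMono s) (σ : Equiv.Perm (Fin k))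
    (h : Function.Injective (s ∘ σ)) : permOf (s ∘ σ) h = σ := by
  apply Equiv.ext
  intro i
  apply hs.injective
  have h1 : monoOf (s ∘ σ) h (permFun (s ∘ σ) h i) = (s ∘ σ) i := monoOf_permFun _ _ _
  rw [monoOf_comp hs σ h] at h1
  exact h1

end SortPerm

open scoped Classical in
lemma cauchy_binet {n k : ℕ} (A B : Matrix (Fin n) (Fin n) ℝ) (r c : Fin k → Fin n) :
    ((A * B).submatrix r c).det =
      ∑ s ∈ Finset.univ.filter (fun s : Fin k → Fin n => StrictMono s),
        (A.submatrix r s).det * (B.submatrix s c).det := by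
  classical
  set T : (Fin k → Fin n) → ℝ := fun p =>
    (∏ i, A (r i) (p i)) * (B.submatrix p c).det with hT
  -- Step 1: expansion over all functions
  have expand : ((A * B).submatrix r c).det = ∑ p : Fin k → Fin n, T p := by
    have hrows : ((A * B).submatrix r c) =
        fun i => ∑ t : Fin n, A (r i) t • fun j => B t (c j) := by
      ext i j
      simp [Matrix.mul_apply, Finset.sum_apply]
    have h0 : ((A * B).submatrix r c).det =
        (Matrix.detRowAlternating : ((Fin k → ℝ) [⋀^Fin k]→ₗ[ℝ] ℝ))
          ((A * B).submatrix r c) := rfl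
    have hms := MultilinearMap.map_sum
      ((Matrix.detRowAlternating : ((Fin k → ℝ) [⋀^Fin k]→ₗ[ℝ] ℝ)).toMultilinearMap)
      (fun (i : Fin k) (t : Fin n) => A (r i) t • fun j => B t (c j))
    simp only [AlternatingMap.coe_multilinearMap] at hms
    rw [h0, hrows, hms]
    refine Finset.sum_congr rfl fun p _ => ?_
    have hsm := MultilinearMap.map_smul_univ
      ((Matrix.detRowAlternating : ((Fin k → ℝ) [⋀^Fin k]→ₗ[ℝ] ℝ)).toMultilinearMap)
      (fun i => A (r i) (p i)) (fun i j => B (p i) (c j))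
    simp only [AlternatingMap.coe_multilinearMap] at hsm
    rw [hsm]
    rfl
  rw [expand]
  -- Step 2: kill non-injective terms
  rw [← Finset.sum_filter_add_sum_filter_not Finset.univ (fun p => Function.Injective p) T]
  have hnon : ∑ p ∈ Finset.univ.filter (fun p => ¬ Function.Injective p), T p = 0 := by
    refine Finset.sum_eq_zero fun p hp => ?_
    obtain ⟨a, b, hab, hne⟩ := Function.not_injective_iff.1 (Finset.mem_filter.1 hp).2
    have : (B.submatrix p c).det = 0 :=
      Matrix.det_zero_of_row_eq hne (funext fun j => by simp [Matrix.submatrix_apply, hab])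
    simp [hT, this]
  rw [hnon, add_zero]
  -- Step 3+4: group injective functions by (strictly monotone part, permutation)
  have inner : ∀ s : Fin k → Fin n, StrictMono s →
      ∑ σ : Equiv.Perm (Fin k), T (s ∘ σ) =
        (A.submatrix r s).det * (B.submatrix s c).det := by
    intro s hs
    have h1 : ∀ σ : Equiv.Perm (Fin k),
        (B.submatrix (s ∘ σ) c).det = (Equiv.Perm.sign σ : ℝ) * (B.submatrix s c).det := by
      intro σ
      have : B.submatrix (s ∘ σ) c = (B.submatrix s c).submatrix σ id := rfl
      rw [this, Matrix.det_permute]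
    have h2 : (A.submatrix r s).det = ((A.submatrix r s)ᵀ).det := (Matrix.det_transpose _).symm
    rw [h2, Matrix.det_apply', Finset.sum_mul]
    refine Finset.sum_congr rfl fun σ _ => ?_
    simp only [hT, h1, Matrix.transpose_apply, Matrix.submatrix_apply, Function.comp_apply]
    push_cast
    ring
  calc ∑ p ∈ Finset.univ.filter (fun p => Function.Injective p), T p
      = ∑ q ∈ (Finset.univ.filter (fun s : Fin k → Fin n => StrictMono s)) ×ˢ
          (Finset.univ : Finset (Equiv.Perm (Fin k))), T (q.1 ∘ q.2) := by
        refine Finset.sum_bij'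
          (i := fun p hp => (monoOf p (Finset.mem_filter.1 hp).2,
            permOf p (Finset.mem_filter.1 hp).2))
          (j := fun q hq => q.1 ∘ q.2) ?_ ?_ ?_ ?_ ?_
        · intro p hp
          exact Finset.mem_product.2
            ⟨Finset.mem_filter.2 ⟨Finset.mem_univ _, monoOf_strictMono p (Finset.mem_filter.1 hp).2⟩, Finset.mem_univ _⟩
        · intro q hq
          have hs : StrictMono q.1 :=
            (Finset.mem_filter.1 (Finset.mem_product.1 hq).1).2
          exact Finset.mem_filter.2
            ⟨Finset.mem_univ _, hs.injective.comp q.2.injective⟩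
        · intro p hp
          exact monoOf_comp_permOf p (Finset.mem_filter.1 hp).2
        · intro q hq
          have hs : StrictMono q.1 :=
            (Finset.mem_filter.1 (Finset.mem_product.1 hq).1).2
          have hinj : Function.Injective (q.1 ∘ q.2) := hs.injective.comp q.2.injective
          exact Prod.ext (monoOf_comp hs q.2 hinj) (permOf_comp hs q.2 hinj)
        · intro p hp
          rw [monoOf_comp_permOf p (Finset.mem_filter.1 hp).2]
      _ = ∑ s ∈ Finset.univ.filter (fun s : Fin k → Fin n => StrictMono s),
            ∑ σ : Equiv.Perm (Fin k), T (s ∘ σ) := by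
        rw [Finset.sum_product]
      _ = ∑ s ∈ Finset.univ.filter (fun s : Fin k → Fin n => StrictMono s),
            (A.submatrix r s).det * (B.submatrix s c).det :=
        Finset.sum_congr rfl fun s hs => inner s (Finset.mem_filter.1 hs).2

lemma cauchy_pos : ∀ {k : ℕ} (x y : Fin k → ℝ), StrictMono x → StrictMono y →
    (∀ i j, 0 < x i + y j) → 0 < (Matrix.of fun i j => (x i + y j)⁻¹).det := by
  intro k
  induction k with
  | zero => intro x y _ _ _; simp [Matrix.det_isEmpty]
  | succ k ih =>
    intro x y hx hy hpos
    have hne : ∀ i j, x i + y j ≠ 0 := fun i j => (hpos i j).ne'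
    set B : Matrix (Fin (k+1)) (Fin (k+1)) ℝ := Matrix.of fun i j =>
      if i = 0 then (x 0 + y j)⁻¹
      else ((x i - x 0) * (y j - y 0)) * ((x i + y j)⁻¹ * ((x i + y 0)⁻¹ * (x 0 + y j)⁻¹)) with hB
    have hdet : (Matrix.of fun i j => (x i + y j)⁻¹).det = B.det := by
      apply Matrix.det_eq_of_forall_row_eq_smul_add_const
        (fun i => if i = 0 then 0 else (x 0 + y 0) * (x i + y 0)⁻¹) 0 (by simp)
      intro i j
      by_cases h : i = 0
      · simp [hB, h]
      · simp only [hB, Matrix.of_apply, h, if_false, if_true]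
        have h1 := hne i j; have h2 := hne i 0; have h3 := hne 0 j; have h4 := hne 0 0
        field_simp
        ring
    rw [hdet, Matrix.det_succ_column_zero]
    rw [Finset.sum_eq_single 0]
    · have h00 : B 0 0 = (x 0 + y 0)⁻¹ := by simp [hB]
      set C : Matrix (Fin k) (Fin k) ℝ := Matrix.of fun i j => (x i.succ + y j.succ)⁻¹ with hC
      set M2 : Matrix (Fin k) (Fin k) ℝ :=
        Matrix.of fun i j => ((y j.succ - y 0) * (x 0 + y j.succ)⁻¹) * C i j with hM2
      have hsub : (B.submatrix (Fin.succAbove 0) Fin.succ) = Matrix.of fun i j =>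
          ((x i.succ - x 0) * (x i.succ + y 0)⁻¹) * M2 i j := by
        ext i j
        simp [hB, hM2, hC, Matrix.submatrix_apply, Fin.succAbove_zero, Fin.succ_ne_zero]
        ring
      have e1 : (B.submatrix (Fin.succAbove 0) Fin.succ).det =
          (∏ i : Fin k, (x i.succ - x 0) * (x i.succ + y 0)⁻¹) * M2.det := by
        rw [hsub]; exact Matrix.det_mul_column _ _
      have e2 : M2.det = (∏ j : Fin k, (y j.succ - y 0) * (x 0 + y j.succ)⁻¹) * C.det := by
        rw [hM2]; exact Matrix.det_mul_row _ _
      rw [h00, e1, e2]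
      have hpos1 : (0:ℝ) < ∏ i : Fin k, (x i.succ - x 0) * (x i.succ + y 0)⁻¹ :=
        Finset.prod_pos fun i _ =>
          mul_pos (sub_pos.2 (hx (Fin.succ_pos i))) (inv_pos.2 (hpos _ _))
      have hpos2 : (0:ℝ) < ∏ j : Fin k, (y j.succ - y 0) * (x 0 + y j.succ)⁻¹ :=
        Finset.prod_pos fun j _ =>
          mul_pos (sub_pos.2 (hy (Fin.succ_pos j))) (inv_pos.2 (hpos _ _))
      have hih : (0:ℝ) < C.det :=
        ih _ _ (hx.comp Fin.strictMono_succ) (hy.comp Fin.strictMono_succ) fun i j => hpos _ _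
      simp only [Fin.val_zero, pow_zero, one_mul]
      exact mul_pos (inv_pos.2 (hpos 0 0)) (mul_pos hpos1 (mul_pos hpos2 hih))
    · intro i _ hi
      have : B i 0 = 0 := by simp [hB, hi]
      simp [this]
    · simp

section Main

open Filter

variable {n : ℕ}

/-- The totally positive approximate identity. -/
noncomputable def Gmat (n N : ℕ) : Matrix (Fin n) (Fin n) ℝ :=
  Matrix.of fun i j => (2 * ((N:ℝ)+2) ^ (2*(i:ℕ))) *
    (((N:ℝ)+2) ^ (j:ℕ) * ((((N:ℝ)+2) ^ (3*(i:ℕ)) + ((N:ℝ)+2) ^ (3*(j:ℕ)))⁻¹))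

lemma F_pos (N : ℕ) : (0:ℝ) < (N:ℝ)+2 := by positivity

lemma F_one_lt (N : ℕ) : (1:ℝ) < (N:ℝ)+2 := by
  have : (0:ℝ) ≤ (N:ℝ) := Nat.cast_nonneg N
  linarith

lemma Gmat_tp (N : ℕ) : TotallyPositive (Gmat n N) := by
  intro k r c hr hc
  set F : ℝ := (N:ℝ)+2 with hF
  have hF1 : (1:ℝ) < F := F_one_lt N
  have hF0 : (0:ℝ) < F := F_pos N
  set C : Matrix (Fin k) (Fin k) ℝ :=
    Matrix.of fun i j => (F ^ (3*((r i):ℕ)) + F ^ (3*((c j):ℕ)))⁻¹ with hC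
  set M2 : Matrix (Fin k) (Fin k) ℝ := Matrix.of fun i j => F ^ ((c j):ℕ) * C i j with hM2
  have hsub : (Gmat n N).submatrix r c =
      Matrix.of fun i j => (2 * F ^ (2*((r i):ℕ))) * M2 i j := by
    ext i j
    simp [Gmat, hM2, hC, Matrix.submatrix_apply, mul_assoc]
    rfl
  have e1 : ((Gmat n N).submatrix r c).det =
      (∏ i : Fin k, 2 * F ^ (2*((r i):ℕ))) * M2.det := by
    rw [hsub]; exact Matrix.det_mul_column _ _
  have e2 : M2.det = (∏ j : Fin k, F ^ ((c j):ℕ)) * C.det := by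
    rw [hM2]; exact Matrix.det_mul_row _ _
  have hCpos : 0 < C.det := by
    apply cauchy_pos (fun i => F ^ (3*((r i):ℕ))) (fun j => F ^ (3*((c j):ℕ)))
    · intro a b hab
      exact pow_lt_pow_right₀ hF1 (by have := hr hab; omega)
    · intro a b hab
      exact pow_lt_pow_right₀ hF1 (by have := hc hab; omega)
    · intro i j
      positivity
  rw [e1, e2]
  have h1 : (0:ℝ) < ∏ i : Fin k, 2 * F ^ (2*((r i):ℕ)) :=
    Finset.prod_pos fun i _ => by positivity
  have h2 : (0:ℝ) < ∏ j : Fin k, F ^ ((c j):ℕ) :=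
    Finset.prod_pos fun j _ => by positivity
  exact mul_pos h1 (mul_pos h2 hCpos)

lemma Gmat_diag (N : ℕ) (i : Fin n) : Gmat n N i i = 1 := by
  have hF0 : (0:ℝ) < (N:ℝ)+2 := F_pos N
  have ht : ((N:ℝ)+2) ^ ((i:ℕ)) ≠ 0 := by positivity
  show (2 * ((N:ℝ)+2) ^ (2*(i:ℕ))) *
    (((N:ℝ)+2) ^ ((i:ℕ)) * ((((N:ℝ)+2) ^ (3*(i:ℕ)) + ((N:ℝ)+2) ^ (3*(i:ℕ)))⁻¹)) = 1
  rw [pow_mul', pow_mul']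
  set t : ℝ := ((N:ℝ)+2) ^ ((i:ℕ)) with hti
  field_simp
  ring

lemma Gmat_nonneg (N : ℕ) (i j : Fin n) : 0 ≤ Gmat n N i j := by
  have hF0 : (0:ℝ) < (N:ℝ)+2 := F_pos N
  show 0 ≤ (2 * ((N:ℝ)+2) ^ (2*(i:ℕ))) *
    (((N:ℝ)+2) ^ ((j:ℕ)) * ((((N:ℝ)+2) ^ (3*(i:ℕ)) + ((N:ℝ)+2) ^ (3*(j:ℕ)))⁻¹))
  positivity

lemma Gmat_offdiag_le (N : ℕ) (i j : Fin n) (hij : i ≠ j) :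
    Gmat n N i j ≤ 2 / ((N:ℝ)+2) := by
  set F : ℝ := (N:ℝ)+2 with hF
  have hF1 : (1:ℝ) < F := F_one_lt N
  have hF0 : (0:ℝ) < F := F_pos N
  have hvij : (i:ℕ) ≠ (j:ℕ) := fun hv => hij (Fin.ext hv)
  have hden : F ^ (2*(i:ℕ)+(j:ℕ)+1) ≤ F ^ (3*(i:ℕ)) + F ^ (3*(j:ℕ)) := by
    rcases Nat.lt_or_ge (i:ℕ) (j:ℕ) with h | h
    · calc F ^ (2*(i:ℕ)+(j:ℕ)+1) ≤ F ^ (3*(j:ℕ)) :=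
            pow_le_pow_right₀ hF1.le (by omega)
        _ ≤ _ := le_add_of_nonneg_left (by positivity)
    · have h' : (j:ℕ) < (i:ℕ) := lt_of_le_of_ne h (Ne.symm hvij)
      calc F ^ (2*(i:ℕ)+(j:ℕ)+1) ≤ F ^ (3*(i:ℕ)) :=
            pow_le_pow_right₀ hF1.le (by omega)
        _ ≤ _ := le_add_of_nonneg_right (by positivity)
  have hd0 : (0:ℝ) < F ^ (2*(i:ℕ)+(j:ℕ)+1) := by positivity
  calc Gmat n N i j
      = (2 * F ^ (2*(i:ℕ))) * (F ^ ((j:ℕ)) * ((F ^ (3*(i:ℕ)) + F ^ (3*(j:ℕ)))⁻¹)) := rfl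
    _ ≤ (2 * F ^ (2*(i:ℕ))) * (F ^ ((j:ℕ)) * ((F ^ (2*(i:ℕ)+(j:ℕ)+1))⁻¹)) := by
        gcongr
    _ = 2 / F := by
        rw [pow_succ, pow_add]
        have h1 : F ^ (2*(i:ℕ)) ≠ 0 := by positivity
        have h2 : F ^ ((j:ℕ)) ≠ 0 := by positivity
        field_simp

lemma Gmat_tendsto : Filter.Tendsto (fun N => Gmat n N) Filter.atTop (nhds 1) := by
  apply tendsto_pi_nhds.2
  intro i
  rw [tendsto_pi_nhds]
  intro j
  by_cases h : i = j
  · subst h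
    have : (fun N => Gmat n N i i) = fun _ => (1:ℝ) := funext fun N => Gmat_diag N i
    rw [this, Matrix.one_apply_eq]
    exact tendsto_const_nhds
  · rw [Matrix.one_apply_ne h]
    apply squeeze_zero (fun N => Gmat_nonneg N i j) (fun N => Gmat_offdiag_le N i j h)
    exact Filter.Tendsto.div_atTop tendsto_const_nhds
      (Filter.tendsto_atTop_add_const_right _ 2 tendsto_natCast_atTop_atTop)

end Main

/-- Whitney's theorem: every invertible totally nonnegative matrix is the limit
of a sequence of totally positive matrices (entrywise convergence). -/
theorem stmt3 (n : ℕ) (x : Matrix (Fin n) (Fin n) ℝ)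
    (hx : TotallyNonneg x) (hxu : IsUnit x.det) :
    ∃ f : ℕ → Matrix (Fin n) (Fin n) ℝ,
      (∀ N, TotallyPositive (f N)) ∧
      Filter.Tendsto f Filter.atTop (nhds x) := by
  classical
  refine ⟨fun N => Gmat n N * x, ?_, ?_⟩
  · intro N k r c hr hc
    rw [cauchy_binet]
    -- find a strictly monotone s₀ with nonzero minor of x in columns c
    have h1 : ((1 : Matrix (Fin n) (Fin n) ℝ).submatrix c c) = (1 : Matrix (Fin k) (Fin k) ℝ) := by
      ext i j
      simp [Matrix.one_apply, Matrix.submatrix_apply, hc.injective.eq_iff]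
    have hsum := cauchy_binet x⁻¹ x c c
    rw [Matrix.nonsing_inv_mul x hxu, h1, Matrix.det_one] at hsum
    have hex : ∃ s ∈ Finset.univ.filter (fun s : Fin k → Fin n => StrictMono s),
        (x.submatrix s c).det ≠ 0 := by
      by_contra hno
      push_neg at hno
      rw [Finset.sum_eq_zero (fun s hs => by rw [hno s hs, mul_zero])] at hsum
      exact one_ne_zero hsum
    obtain ⟨s₀, hs₀mem, hs₀ne⟩ := hex
    have hs₀ : StrictMono s₀ := (Finset.mem_filter.1 hs₀mem).2
    apply Finset.sum_pos'
    · intro s hs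
      have hsm : StrictMono s := (Finset.mem_filter.1 hs).2
      exact mul_nonneg (Gmat_tp N k r s hr hsm).le (hx k s c hsm hc)
    · refine ⟨s₀, hs₀mem, mul_pos (Gmat_tp N k r s₀ hr hs₀) ?_⟩
      exact lt_of_le_of_ne (hx k s₀ c hs₀ hc) (Ne.symm hs₀ne)
  · have := Gmat_tendsto.mul (tendsto_const_nhds (x := x))
    simpa using this
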